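/- Let X be a separable reflexive Banach space with property (m_p) for some p > 1, and let T be a bounded linear operator on X. If there exists a maximizing sequence for T with no norm-convergent subsequence, then the essential norm of T equals the norm of T. -/

import Mathlib

open Filter Topology

/-- Weak convergence of a sequence in a normed space. -/
def WeakTendsto {X : Type*} [NormedAddCommGroup X] [NormedSpace ℝ X]
    (x : ℕ → X) (x₀ : X) : Prop :=
  ∀ f : X →L[ℝ] ℝ, Tendsto (fun n => f (x n)) atTop (𝓝 (f x₀))

/-- Property (m_p). -/
def PropertyMp {X : Type*} [NormedAddCommGroup X] [NormedSpace ℝ X] (p : ℝ) : Prop :=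
  ∀ x : ℕ → X, WeakTendsto x 0 → ∀ y : X,
    limsup (fun n => ‖x n + y‖ ^ p) atTop = limsup (fun n => ‖x n‖ ^ p) atTop + ‖y‖ ^ p

/-- A maximizing sequence for a bounded operator: unit vectors with ‖T xₙ‖ → ‖T‖. -/
def MaximizingSeq {X : Type*} [NormedAddCommGroup X] [NormedSpace ℝ X]
    (T : X →L[ℝ] X) (x : ℕ → X) : Prop :=
  (∀ n, ‖x n‖ = 1) ∧ Tendsto (fun n => ‖T (x n)‖) atTop (𝓝 ‖T‖)

/-- Weak cluster point of some maximizing sequence for T. -/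
def WeakClusterPtOfMaximizing {X : Type*} [NormedAddCommGroup X] [NormedSpace ℝ X]
    (T : X →L[ℝ] X) (x₀ : X) : Prop :=
  ∃ x : ℕ → X, MaximizingSeq T x ∧ ∃ φ : ℕ → ℕ, StrictMono φ ∧ WeakTendsto (x ∘ φ) x₀

/-- The essential norm: distance to the compact operators. -/
noncomputable def essNorm {X : Type*} [NormedAddCommGroup X] [NormedSpace ℝ X]
    (T : X →L[ℝ] X) : ℝ :=
  sInf {c : ℝ | ∃ K : X →L[ℝ] X, IsCompactOperator K ∧ c = ‖T - K‖}

open NormedSpace TopologicalSpace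


lemma aux_sep_of_dual_sep {Y : Type*} [NormedAddCommGroup Y] [NormedSpace ℝ Y]
    [SeparableSpace (StrongDual ℝ Y)] : SeparableSpace Y := by
  obtain ⟨D, Dcount, Ddense⟩ := exists_countable_dense (StrongDual ℝ Y)
  have hg : ∀ f : StrongDual ℝ Y, ∃ y : Y, ‖y‖ ≤ 1 ∧ ‖f‖ / 2 ≤ ‖f y‖ := by
    intro f
    rcases eq_or_ne f 0 with rfl | hf
    · exact ⟨0, by simp⟩
    · have h2 : ‖f‖ / 2 < ‖f‖ := half_lt_self (norm_pos_iff.mpr hf)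
      obtain ⟨y, hy1, hy2⟩ := f.exists_lt_apply_of_lt_opNorm h2
      exact ⟨y, hy1.le, hy2.le⟩
  choose g hg1 hg2 using hg
  set S : Set Y := g '' D with hS
  have hScount : S.Countable := Dcount.image g
  set M := (Submodule.span ℝ S).topologicalClosure with hMdef
  have hM : ∀ v : Y, v ∈ M := by
    by_contra h
    push_neg at h
    obtain ⟨v, hv⟩ := h
    obtain ⟨G, u, hGu, huv⟩ := geometric_hahn_banach_closed_point
      M.convex (Submodule.isClosed_topologicalClosure _) hv
    have hG0 : ∀ a ∈ M, G a = 0 := by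
      intro a ha
      by_contra hGa
      have h1 := hGu (((u + 1) / G a) • a) (M.smul_mem _ ha)
      rw [map_smul, smul_eq_mul, div_mul_cancel₀ _ hGa] at h1
      linarith
    have hu0 : 0 < u := by simpa using hGu 0 M.zero_mem
    have hGne : G ≠ 0 := by
      intro h0
      rw [h0] at huv
      simp at huv
      linarith
    have hGpos : 0 < ‖G‖ := norm_pos_iff.mpr hGne
    set G' : StrongDual ℝ Y := ‖G‖⁻¹ • G with hG'
    have hG'norm : ‖G'‖ = 1 := by
      rw [hG', norm_smul, norm_inv, norm_norm, inv_mul_cancel₀ (ne_of_gt hGpos)]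
    have hG'0 : ∀ a ∈ M, G' a = 0 := by
      intro a ha
      simp [hG', hG0 a ha]
    obtain ⟨f, hfD, hfd⟩ : ∃ f ∈ D, dist f G' < 1/4 := by
      rcases Metric.dense_iff.mp Ddense G' (1/4) (by norm_num) with ⟨f, hf1, hf2⟩
      exact ⟨f, hf2, by simpa [dist_comm] using hf1⟩
    have hfnorm : (3:ℝ)/4 ≤ ‖f‖ := by
      have : ‖G'‖ ≤ ‖G' - f‖ + ‖f‖ := by
        simpa using norm_add_le (G' - f) f
      rw [hG'norm] at this
      have h4 : ‖G' - f‖ < 1/4 := by rwa [norm_sub_rev, ← dist_eq_norm]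
      linarith
    have hmem : g f ∈ M := by
      have : g f ∈ S := Set.mem_image_of_mem g hfD
      exact (Submodule.le_topologicalClosure _) (Submodule.subset_span this)
    have heq : f (g f) = (f - G') (g f) := by
      simp [hG'0 _ hmem]
    have hbound : ‖f (g f)‖ ≤ 1/4 := by
      rw [heq]
      calc ‖(f - G') (g f)‖ ≤ ‖f - G'‖ * ‖g f‖ := (f - G').le_opNorm _
        _ ≤ (1/4) * 1 := by
            apply mul_le_mul _ (hg1 f) (norm_nonneg _) (by norm_num)
            rw [← dist_eq_norm]; exact hfd.le
        _ = 1/4 := by ring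
    have := hg2 f
    linarith
  have hsep : IsSeparable (Set.univ : Set Y) := by
    have h1 : IsSeparable (Submodule.span ℝ S : Set Y) := hScount.isSeparable.span
    refine h1.closure.mono fun v _ => ?_
    have := hM v
    rwa [hMdef, ← Submodule.topologicalClosure_coe] at *
    
  exact isSeparable_univ_iff.mp hsep


lemma aux_weak_subseq {Y : Type*} [NormedAddCommGroup Y] [NormedSpace ℝ Y]
    [SeparableSpace (StrongDual ℝ Y)]
    (hrefl : Function.Surjective (inclusionInDoubleDual ℝ Y))
    (x : ℕ → Y) (C : ℝ) (hC : ∀ n, ‖x n‖ ≤ C) :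
    ∃ (φ : ℕ → ℕ) (x₀ : Y), StrictMono φ ∧
      ∀ f : StrongDual ℝ Y, Tendsto (fun n => f (x (φ n))) atTop (𝓝 (f x₀)) := by
  have hC0 : 0 ≤ C := le_trans (norm_nonneg _) (hC 0)
  obtain ⟨D, Dcount, Ddense⟩ := exists_countable_dense (StrongDual ℝ Y)
  obtain ⟨e, hD⟩ := Dcount.exists_eq_range Ddense.nonempty
  set s : Set (ℕ → ℝ) := Set.univ.pi fun k => Metric.closedBall (0:ℝ) (‖e k‖ * C) with hs
  have hscomp : IsCompact s := isCompact_univ_pi fun k => isCompact_closedBall _ _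
  set u : ℕ → ℕ → ℝ := fun n k => e k (x n) with hu
  have hmem : ∀ n, u n ∈ s := by
    intro n
    rw [hs, Set.mem_univ_pi]
    intro k
    rw [Metric.mem_closedBall, dist_zero_right]
    calc ‖e k (x n)‖ ≤ ‖e k‖ * ‖x n‖ := (e k).le_opNorm _
      _ ≤ ‖e k‖ * C := mul_le_mul_of_nonneg_left (hC n) (norm_nonneg _)
  obtain ⟨a, -, φ, hφ, hconv⟩ := hscomp.tendsto_subseq hmem
  have hptw : ∀ k, Tendsto (fun n => e k (x (φ n))) atTop (𝓝 (a k)) := by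
    intro k
    exact (tendsto_pi_nhds.mp hconv) k
  have hcauchy : ∀ f : StrongDual ℝ Y, CauchySeq fun n => f (x (φ n)) := by
    intro f
    rw [Metric.cauchySeq_iff]
    intro ε hε
    have hε4 : (0:ℝ) < ε / (4 * (C + 1)) := by positivity
    obtain ⟨k, hk⟩ : ∃ k, dist (e k) f < ε / (4 * (C + 1)) := by
      rcases Metric.dense_iff.mp Ddense f _ hε4 with ⟨g, hg1, hg2⟩
      rw [hD] at hg2
      obtain ⟨k, rfl⟩ := hg2
      exact ⟨k, by simpa [dist_comm] using hg1⟩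
    obtain ⟨N, hN⟩ := Metric.cauchySeq_iff.mp (hptw k).cauchySeq (ε/2) (by positivity)
    refine ⟨N, fun i hi j hj => ?_⟩
    have key : ∀ l, dist (f (x (φ l))) (e k (x (φ l))) ≤ ε / 4 := by
      intro l
      have h1 : dist (f (x (φ l))) (e k (x (φ l))) = ‖(f - e k) (x (φ l))‖ := by
        rw [dist_eq_norm]; simp [ContinuousLinearMap.sub_apply]
      rw [h1]
      calc ‖(f - e k) (x (φ l))‖ ≤ ‖f - e k‖ * ‖x (φ l)‖ := (f - e k).le_opNorm _
        _ ≤ (ε / (4 * (C + 1))) * C := by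
            apply mul_le_mul _ (hC _) (norm_nonneg _) hε4.le
            rw [← dist_eq_norm, dist_comm]
            exact hk.le
        _ ≤ ε / 4 := by
            rw [div_mul_eq_mul_div, div_le_div_iff₀ (by positivity) (by norm_num)]
            nlinarith
    have hmid := hN i hi j hj
    have htri := dist_triangle4 (f (x (φ i))) (e k (x (φ i))) (e k (x (φ j))) (f (x (φ j)))
    have h2 : dist (e k (x (φ j))) (f (x (φ j))) ≤ ε / 4 := by
      rw [dist_comm]; exact key j
    linarith [key i]
  choose b hb using fun f => cauchySeq_tendsto_of_complete (hcauchy f)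
  have hadd : ∀ f g : StrongDual ℝ Y, b (f + g) = b f + b g := fun f g =>
    tendsto_nhds_unique (hb (f + g))
      (by simpa [ContinuousLinearMap.add_apply] using (hb f).add (hb g))
  have hsmul : ∀ (c : ℝ) (f : StrongDual ℝ Y), b (c • f) = c * b f := fun c f =>
    tendsto_nhds_unique (hb (c • f))
      (by simpa [ContinuousLinearMap.smul_apply, smul_eq_mul] using (hb f).const_mul c)
  have hbound : ∀ f : StrongDual ℝ Y, ‖b f‖ ≤ C * ‖f‖ := by
    intro f
    apply le_of_tendsto (hb f).norm
    filter_upwards with n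
    calc ‖f (x (φ n))‖ ≤ ‖f‖ * ‖x (φ n)‖ := f.le_opNorm _
      _ ≤ ‖f‖ * C := mul_le_mul_of_nonneg_left (hC _) (norm_nonneg f)
      _ = C * ‖f‖ := mul_comm _ _
  let Flin : StrongDual ℝ Y →ₗ[ℝ] ℝ :=
    { toFun := b, map_add' := hadd, map_smul' := fun c f => by simpa [smul_eq_mul] using hsmul c f }
  let F : StrongDual ℝ (StrongDual ℝ Y) := Flin.mkContinuous C hbound
  obtain ⟨x₀, hx₀⟩ := hrefl F
  refine ⟨φ, x₀, hφ, fun f => ?_⟩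
  have h3 : f x₀ = b f := by
    have : inclusionInDoubleDual ℝ Y x₀ f = F f := by rw [hx₀]
    simpa [F, Flin] using this
  rw [h3]
  exact hb f

lemma aux_compact_wknull {Y : Type*} [NormedAddCommGroup Y] [NormedSpace ℝ Y]
    (K : Y →L[ℝ] Y) (hK : IsCompactOperator K) (y : ℕ → Y) (C : ℝ)
    (hC : ∀ n, ‖y n‖ ≤ C)
    (hw : ∀ f : StrongDual ℝ Y, Tendsto (fun n => f (y n)) atTop (𝓝 0)) :
    Tendsto (fun n => K (y n)) atTop (𝓝 0) := by
  obtain ⟨S, hScomp, hSmem⟩ := hK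
  obtain ⟨δ, hδ, hball⟩ := Metric.mem_nhds_iff.mp hSmem
  have hC0 : 0 ≤ C := le_trans (norm_nonneg _) (hC 0)
  set r : ℝ := δ / (2 * (C + 1)) with hr
  have hrpos : 0 < r := by positivity
  have hmem : ∀ n, K (r • y n) ∈ S := by
    intro n
    apply hball
    rw [Metric.mem_ball, dist_zero_right, norm_smul, Real.norm_eq_abs, abs_of_pos hrpos]
    have h1 : r * ‖y n‖ ≤ r * C := mul_le_mul_of_nonneg_left (hC n) hrpos.le
    have h2 : r * C ≤ δ / 2 := by
      rw [hr, div_mul_eq_mul_div, div_le_div_iff₀ (by positivity) (by norm_num)]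
      nlinarith
    linarith
  apply tendsto_of_subseq_tendsto
  intro ns hns
  obtain ⟨a, -, ms, hms, hconv⟩ :=
    hScomp.tendsto_subseq (x := fun n => K (r • y (ns n))) fun n => hmem (ns n)
  have ha0 : a = 0 := by
    apply eq_zero_of_forall_dual_eq_zero ℝ
    intro f
    have h1 : Tendsto (fun i => f (K (r • y (ns (ms i))))) atTop (𝓝 (f a)) :=
      (f.continuous.tendsto a).comp hconv
    have h3 : Tendsto (fun n => f (K (r • y n))) atTop (𝓝 0) := by
      have hg := hw (r • (f.comp K))
      have he : ∀ n, f (K (r • y n)) = (r • (f.comp K)) (y n) := by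
        intro n; simp [map_smul]
      simpa [he] using hg
    have h2 : Tendsto (fun i => f (K (r • y (ns (ms i))))) atTop (𝓝 0) :=
      h3.comp (hns.comp hms.tendsto_atTop)
    exact tendsto_nhds_unique h1 h2
  refine ⟨ms, ?_⟩
  have hKy : ∀ j, K (y j) = r⁻¹ • K (r • y j) := by
    intro j
    rw [map_smul, smul_smul, inv_mul_cancel₀ (ne_of_gt hrpos), one_smul]
  have := hconv.const_smul r⁻¹
  rw [ha0, smul_zero] at this
  have heq : (fun n => K (y (ns (ms n)))) = fun n => r⁻¹ • K (r • y (ns (ms n))) :=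
    funext fun n => hKy _
  rw [heq]
  exact this


lemma aux_limsup_affine (u : ℕ → ℝ) (C : ℝ) (hb : ∀ n, u n ≤ C) (h0 : ∀ n, 0 ≤ u n)
    (c ε : ℝ) (hc : 0 ≤ c) :
    limsup (fun n => c * u n + ε) atTop = c * limsup u atTop + ε := by
  have hmono : Monotone (fun t : ℝ => c * t + ε) := fun a b hab => by dsimp only; nlinarith
  have hcont : ContinuousAt (fun t : ℝ => c * t + ε) (limsup u atTop) := by fun_prop
  have hbdd : IsBoundedUnder (· ≤ ·) atTop u := isBoundedUnder_of ⟨C, hb⟩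
  have hcob : IsCoboundedUnder (· ≤ ·) atTop u := isCoboundedUnder_le_of_le _ h0
  exact (hmono.map_limsup_of_continuousAt u hcont hbdd hcob).symm

lemma aux_limsup_rpow (u : ℕ → ℝ) (C : ℝ) (hb : ∀ n, u n ≤ C) (h0 : ∀ n, 0 ≤ u n)
    {p : ℝ} (hp : 0 < p) :
    limsup (fun n => u n ^ p) atTop = (limsup u atTop) ^ p := by
  have hmono : Monotone (fun t : ℝ => (t ⊔ 0) ^ p) := fun a b hab =>
    Real.rpow_le_rpow le_sup_right (sup_le_sup_right hab 0) hp.le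
  have hcont : ContinuousAt (fun t : ℝ => (t ⊔ 0) ^ p) (limsup u atTop) := by
    apply ContinuousAt.rpow_const
    · exact (continuous_id.max continuous_const).continuousAt
    · right; exact hp.le
  have hbdd : IsBoundedUnder (· ≤ ·) atTop u := isBoundedUnder_of ⟨C, hb⟩
  have hcob : IsCoboundedUnder (· ≤ ·) atTop u := isCoboundedUnder_le_of_le _ h0
  have h := hmono.map_limsup_of_continuousAt u hcont hbdd hcob
  have hsup0 : 0 ≤ limsup u atTop :=
    le_limsup_of_frequently_le (Frequently.of_forall h0) hbdd
  rw [sup_eq_left.mpr hsup0] at h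
  have h2 : ((fun t : ℝ => (t ⊔ 0) ^ p) ∘ u) = fun n => u n ^ p :=
    funext fun n => by simp only [Function.comp_apply, sup_eq_left.mpr (h0 n)]
  rw [h2] at h
  exact h.symm

theorem stmt2 {X : Type*} [NormedAddCommGroup X] [NormedSpace ℝ X] [CompleteSpace X]
    [TopologicalSpace.SeparableSpace X]
    (hrefl : Function.Surjective (NormedSpace.inclusionInDoubleDual ℝ X))
    {p : ℝ} (hp : 1 < p) (hmp : PropertyMp (X := X) p)
    (T : X →L[ℝ] X) (x : ℕ → X) (hx : MaximizingSeq T x)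
    (hnoconv : ¬ ∃ (φ : ℕ → ℕ) (y : X), StrictMono φ ∧ Tendsto (x ∘ φ) atTop (𝓝 y)) :
    essNorm T = ‖T‖ := by
  classical
  obtain ⟨hx1, hx2⟩ := hx
  have hp0 : (0:ℝ) < p := lt_trans one_pos hp
  haveI hsep2 : SeparableSpace (StrongDual ℝ (StrongDual ℝ X)) :=
    (hrefl.denseRange).separableSpace (NormedSpace.inclusionInDoubleDual ℝ X).continuous
  haveI hsep1 : SeparableSpace (StrongDual ℝ X) := aux_sep_of_dual_sep
  obtain ⟨φ, x₀, hφ, hweak⟩ := aux_weak_subseq hrefl x 1 fun n => (hx1 n).le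
  set y : ℕ → X := fun n => x (φ n) - x₀ with hy
  have hxy : ∀ n, y n + x₀ = x (φ n) := fun n => by simp [hy]
  have hynorm : ∀ n, ‖y n‖ ≤ 1 + ‖x₀‖ := fun n => by
    calc ‖x (φ n) - x₀‖ ≤ ‖x (φ n)‖ + ‖x₀‖ := norm_sub_le _ _
      _ = 1 + ‖x₀‖ := by rw [hx1]
  have hywk : WeakTendsto y 0 := by
    intro f
    have h1 : Tendsto (fun n => f (x (φ n)) - f x₀) atTop (𝓝 (f x₀ - f x₀)) :=
      (hweak f).sub tendsto_const_nhds
    simpa [hy, map_sub] using h1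
  set ℓ := limsup (fun n => ‖y n‖) atTop with hℓ
  have hbddy : IsBoundedUnder (· ≤ ·) atTop fun n => ‖y n‖ :=
    isBoundedUnder_of ⟨1 + ‖x₀‖, hynorm⟩
  have hℓ0 : 0 ≤ ℓ :=
    le_limsup_of_frequently_le (Frequently.of_forall fun n => norm_nonneg _) hbddy
  have h1 : (1:ℝ) = ℓ ^ p + ‖x₀‖ ^ p := by
    have hA := hmp y hywk x₀
    have e1 : (fun n => ‖y n + x₀‖ ^ p) = (fun _ => (1:ℝ)) := funext fun n => by
      rw [hxy n, hx1 (φ n), Real.one_rpow]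
    rw [e1, limsup_const,
      aux_limsup_rpow _ _ hynorm (fun n => norm_nonneg _) hp0] at hA
    exact hA
  have hTy : ∀ f : StrongDual ℝ X, Tendsto (fun n => f (T (y n))) atTop (𝓝 0) := by
    intro f
    have := hywk (f.comp T)
    simpa using this
  have hTywk : WeakTendsto (fun n => T (y n)) 0 := by
    intro f
    simpa using hTy f
  have hTbd : ∀ n, ‖T (y n)‖ ≤ ‖T‖ * (1 + ‖x₀‖) := fun n =>
    le_trans (T.le_opNorm _) (mul_le_mul_of_nonneg_left (hynorm n) (norm_nonneg T))
  set m := limsup (fun n => ‖T (y n)‖) atTop with hm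
  have hbddTy : IsBoundedUnder (· ≤ ·) atTop fun n => ‖T (y n)‖ :=
    isBoundedUnder_of ⟨‖T‖ * (1 + ‖x₀‖), hTbd⟩
  have hm0 : 0 ≤ m :=
    le_limsup_of_frequently_le (Frequently.of_forall fun n => norm_nonneg _) hbddTy
  have h2 : ‖T‖ ^ p = m ^ p + ‖T x₀‖ ^ p := by
    have hA := hmp (fun n => T (y n)) hTywk (T x₀)
    have e2 : (fun n => ‖T (y n) + T x₀‖ ^ p) = fun n => ‖T (x (φ n))‖ ^ p :=
      funext fun n => by rw [← map_add, hxy n]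
    rw [e2] at hA
    have h4 : Tendsto (fun n => ‖T (x (φ n))‖) atTop (𝓝 ‖T‖) :=
      hx2.comp hφ.tendsto_atTop
    have e3 : limsup (fun n => ‖T (x (φ n))‖ ^ p) atTop = ‖T‖ ^ p :=
      (h4.rpow_const (Or.inr hp0.le)).limsup_eq
    rw [e3, aux_limsup_rpow _ _ hTbd (fun n => norm_nonneg _) hp0] at hA
    exact hA
  have hℓpos : 0 < ℓ := by
    rcases lt_or_eq_of_le hℓ0 with h | h
    · exact h
    · exfalso
      have hb' : IsBoundedUnder (· ≥ ·) atTop fun n => ‖y n‖ :=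
        isBoundedUnder_of ⟨0, fun n => norm_nonneg _⟩
      have hliminf : liminf (fun n => ‖y n‖) atTop = 0 := by
        apply le_antisymm
        · rw [hℓ] at h
          exact h ▸ liminf_le_limsup hbddy hb'
        · exact le_liminf_of_le hbddy.isCoboundedUnder_ge
            (Eventually.of_forall fun n => norm_nonneg _)
      have htend : Tendsto (fun n => ‖y n‖) atTop (𝓝 0) :=
        tendsto_of_liminf_eq_limsup hliminf h.symm hbddy hb'
      have hy0 : Tendsto y atTop (𝓝 0) := tendsto_zero_iff_norm_tendsto_zero.mpr htend
      have hxφ : Tendsto (x ∘ φ) atTop (𝓝 x₀) := by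
        have := hy0.add_const x₀
        rw [zero_add] at this
        have heq : (fun n => y n + x₀) = x ∘ φ := funext fun n => hxy n
        rwa [heq] at this
      exact hnoconv ⟨φ, x₀, hφ, hxφ⟩
  have hkey : ∀ c ∈ {c : ℝ | ∃ K : X →L[ℝ] X, IsCompactOperator K ∧ c = ‖T - K‖},
      ‖T‖ ≤ c := by
    rintro c ⟨K, hKc, rfl⟩
    have hTx₀ : ‖T x₀‖ ^ p ≤ (‖T‖ * ‖x₀‖) ^ p :=
      Real.rpow_le_rpow (norm_nonneg _) (T.le_opNorm x₀) hp0.le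
    have hfact : (‖T‖ * ‖x₀‖) ^ p = ‖T‖ ^ p * ‖x₀‖ ^ p :=
      Real.mul_rpow (norm_nonneg _) (norm_nonneg _)
    have hge : (‖T‖ * ℓ) ^ p ≤ m ^ p := by
      rw [Real.mul_rpow (norm_nonneg T) hℓ0]
      have hℓp : ℓ ^ p = 1 - ‖x₀‖ ^ p := by linarith
      rw [hℓp]
      nlinarith
    have hge' : ‖T‖ * ℓ ≤ m := by
      by_contra hlt
      push_neg at hlt
      have := Real.rpow_lt_rpow hm0 hlt hp0
      linarith
    have hKy : Tendsto (fun n => K (y n)) atTop (𝓝 0) :=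
      aux_compact_wknull K hKc y (1 + ‖x₀‖) hynorm fun f => by simpa using hywk f
    have hle : ∀ ε > (0:ℝ), m ≤ ‖T - K‖ * ℓ + ε := by
      intro ε hε
      have h7 : ∀ᶠ n in atTop, ‖K (y n)‖ < ε := by
        have h8 := hKy.norm
        rw [norm_zero] at h8
        exact h8.eventually_lt_const hε
      have hev : ∀ᶠ n in atTop, ‖T (y n)‖ ≤ ‖T - K‖ * ‖y n‖ + ε := by
        filter_upwards [h7] with n hn
        have h9 : T (y n) = (T - K) (y n) + K (y n) := by
          simp [ContinuousLinearMap.sub_apply]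
        calc ‖T (y n)‖ = ‖(T - K) (y n) + K (y n)‖ := by rw [← h9]
          _ ≤ ‖(T - K) (y n)‖ + ‖K (y n)‖ := norm_add_le _ _
          _ ≤ ‖T - K‖ * ‖y n‖ + ε := add_le_add ((T - K).le_opNorm _) hn.le
      have h8 : m ≤ limsup (fun n => ‖T - K‖ * ‖y n‖ + ε) atTop := by
        refine limsup_le_limsup hev ?_ ?_
        · exact isCoboundedUnder_le_of_le _ fun n => norm_nonneg _
        · exact isBoundedUnder_of ⟨‖T - K‖ * (1 + ‖x₀‖) + ε, fun n =>
            add_le_add_left (mul_le_mul_of_nonneg_left (hynorm n) (norm_nonneg _)) ε⟩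
      rwa [aux_limsup_affine _ _ hynorm (fun n => norm_nonneg _) _ _ (norm_nonneg _)] at h8
    have hle' : m ≤ ‖T - K‖ * ℓ := le_of_forall_pos_le_add hle
    have hfin : ‖T‖ * ℓ ≤ ‖T - K‖ * ℓ := le_trans hge' hle'
    exact le_of_mul_le_mul_right hfin hℓpos
  have hmem : ‖T‖ ∈ {c : ℝ | ∃ K : X →L[ℝ] X, IsCompactOperator K ∧ c = ‖T - K‖} :=
    ⟨0, isCompactOperator_zero, by simp⟩
  unfold essNorm
  apply le_antisymm
  · exact csInf_le ⟨‖T‖, hkey⟩ hmem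
  · exact le_csInf ⟨‖T‖, hmem⟩ hkey
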